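/- arXiv:2002.09622 — 2 statements merged into one kernel-verified Lean document; each statement's English description precedes it below -/
import Mathlib

section
/- On monotone neighborhood models with intersection-style public announcement semantics, the reduction axiom for W is valid: [ψ]Wφ ↔ (ψ → W[ψ]φ). -/
structure NModel (S : Type) where
  N : S → Set (Set S)
  V : ℕ → Set S

/-- The intersection submodel `M^∩X`, with carrier `X`,
`N^∩X(s) = {P ∩ X | P ∈ N(s)}` and `V^X(p) = V(p) ∩ X`. -/
def restrict {S : Type} (M : NModel S) (X : Set S) : NModel X where
  N := fun s => {Q | ∃ P ∈ M.N s.val, Q = {x : X | x.val ∈ P}}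
  V := fun p => {x : X | x.val ∈ M.V p}

/-- The language L(W) with public announcements. -/
inductive Form : Type where
  | atom : ℕ → Form
  | neg : Form → Form
  | and : Form → Form → Form
  | w : Form → Form
  | ann : Form → Form → Form

/-- Intersection semantics for public announcements. -/
def sat : {S : Type} → NModel S → S → Form → Prop
  | _, M, s, .atom p => s ∈ M.V p
  | _, M, s, .neg φ => ¬ sat M s φ
  | _, M, s, .and φ ψ => sat M s φ ∧ sat M s ψ
  | _, M, s, .w φ => {x | sat M x φ} ∈ M.N s ∧ ¬ sat M s φ
  | _, M, s, .ann ψ φ => ∀ h : sat M s ψ, sat (restrict M {x | sat M x ψ}) ⟨s, h⟩ φ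

def monotone' {S : Type} (M : NModel S) : Prop :=
  ∀ s (X Y : Set S), X ∈ M.N s → X ⊆ Y → Y ∈ M.N s

/-- The reduction axiom `[ψ]Wφ ↔ (ψ → W[ψ]φ)` is valid on monotone neighborhood models. -/
theorem reduction_axiom_AW {S : Type} (M : NModel S) (hm : monotone' M)
    (ψ φ : Form) (s : S) :
    sat M s (.ann ψ (.w φ)) ↔ (sat M s ψ → sat M s (.w (.ann ψ φ))) := by
  simp only [sat]
  constructor
  · intro h hψ
    obtain ⟨⟨P, hP, hPeq⟩, hns⟩ := h hψ
    constructor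
    · refine hm s P _ hP ?_
      intro x hx hxψ
      have : (⟨x, hxψ⟩ : {x | sat M x ψ}) ∈ {x : {x | sat M x ψ} | x.val ∈ P} := hx
      rw [← hPeq] at this
      exact this
    · intro hann
      exact hns (hann hψ)
  · intro h hψ
    obtain ⟨hN, hns⟩ := h hψ
    constructor
    · refine ⟨_, hN, ?_⟩
      ext x
      simp only [Set.mem_setOf_eq]
      constructor
      · intro hx hψ'
        have : (⟨x.val, hψ'⟩ : {x | sat M x ψ}) = x := Subtype.ext rfl
        rw [this]; exact hx
      · intro hx
        exact hx x.prop
    · intro hx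
      exact hns (fun _ => hx)
end

section
/- On monotone neighborhood models with intersection semantics for public announcements, the formula [Wp]Wp is valid: a false belief about a fact survives its own announcement. Equivalently, Wp → W(Wp → p) is valid on monotone neighborhood models. -/
/-- `φ → χ` defined from `¬` and `∧`. -/
def Form.imp (φ χ : Form) : Form := .neg (.and φ (.neg χ))

/-- `[Wp]Wp` is valid on monotone neighborhood models: a false belief about a fact
survives its own announcement. Equivalently, `Wp → W(Wp → p)` is valid on them. -/
theorem announced_false_belief_survives {S : Type} (M : NModel S) (hm : monotone' M) (p : ℕ) :
    (∀ s : S, sat M s (.ann (.w (.atom p)) (.w (.atom p)))) ∧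
    (∀ s : S, sat M s (Form.imp (.w (.atom p)) (.w (Form.imp (.w (.atom p)) (.atom p))))) := by
  constructor
  · intro s h
    obtain ⟨hN, hns⟩ := h
    refine ⟨⟨M.V p, hN, ?_⟩, hns⟩
    ext x
    simp [sat, restrict]
    exact Iff.rfl
  · intro s
    simp only [Form.imp, sat]
    rintro ⟨⟨hN, hns⟩, hcon⟩
    apply hcon
    constructor
    · refine hm s (M.V p) _ hN ?_
      intro x hx
      simp only [sat, Set.mem_setOf_eq]
      rintro ⟨_, hnx⟩
      exact hnx hx
    · simp only [sat, Set.mem_setOf_eq, not_not] at *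
      exact ⟨⟨hN, hns⟩, hns⟩
end
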